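/- Let λ : ℝ² → ℝ be continuous with λ(0,0) ≠ 0, whose zero set has Lebesgue measure zero, and suppose λ vanishes at every point of the ellipse {(x,y) : x² - xy + y² = 2}. Then there is no function f : ℝ → ℝ such that λ(x,y) = f(x)f(y)f(x-y) for all x, y. -/

import Mathlib

open MeasureTheory

noncomputable def phi (t : ℝ) : ℝ := (-t + Real.sqrt (8 - 3 * t ^ 2)) / 2

lemma phi_lipschitz : LipschitzOnWith 6 phi (Set.Icc (0:ℝ) (8/5)) := by
  rw [lipschitzOnWith_iff_dist_le_mul]
  intro u hu v hv
  simp only [Set.mem_Icc] at hu hv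
  rw [Real.dist_eq, Real.dist_eq]
  have hqu : (0:ℝ) ≤ 8 - 3 * u ^ 2 := by nlinarith [hu.1, hu.2]
  have hqv : (0:ℝ) ≤ 8 - 3 * v ^ 2 := by nlinarith [hv.1, hv.2]
  set su := Real.sqrt (8 - 3 * u ^ 2) with hsu_def
  set sv := Real.sqrt (8 - 3 * v ^ 2) with hsv_def
  have hsu : su ≥ 1/2 := by
    rw [ge_iff_le, show (1/2:ℝ) = Real.sqrt ((1/2)^2) by rw [Real.sqrt_sq]; norm_num]
    apply Real.sqrt_le_sqrt; nlinarith [hu.1, hu.2]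
  have hsv : sv ≥ 1/2 := by
    rw [ge_iff_le, show (1/2:ℝ) = Real.sqrt ((1/2)^2) by rw [Real.sqrt_sq]; norm_num]
    apply Real.sqrt_le_sqrt; nlinarith [hv.1, hv.2]
  have h1 : su ^ 2 = 8 - 3*u^2 := Real.sq_sqrt hqu
  have h2 : sv ^ 2 = 8 - 3*v^2 := Real.sq_sqrt hqv
  have hd : (su - sv) * (su + sv) = 3 * (v - u) * (v + u) := by nlinarith [h1, h2]
  have hSnn : (0:ℝ) ≤ su + sv := by linarith
  have habs : |su - sv| * (su + sv) = 3 * |v - u| * |v + u| := by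
    rw [← abs_of_nonneg hSnn, ← abs_mul, hd, abs_mul, abs_mul]
    norm_num
  have hvu : |v + u| ≤ 16/5 := abs_le.2 ⟨by linarith [hu.1, hv.1], by linarith [hu.2, hv.2]⟩
  have key : |su - sv| ≤ 10 * |u - v| := by
    have h3 : |su - sv| ≤ |su - sv| * (su + sv) := by
      nlinarith [abs_nonneg (su - sv)]
    have h4 : 3 * |v - u| * |v + u| ≤ 3 * |v - u| * (16/5) := by
      have := abs_nonneg (v - u); nlinarith
    rw [habs] at h3
    rw [abs_sub_comm v u] at h3 h4
    linarith [abs_nonneg (u - v)]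
  have hpe : phi u - phi v = ((v - u) + (su - sv)) / 2 := by unfold phi; ring
  have habs2 : |phi u - phi v| = |(v - u) + (su - sv)| / 2 := by
    rw [hpe, abs_div, abs_two]
  have htri := abs_add_le (v - u) (su - sv)
  rw [abs_sub_comm v u] at htri
  have : ((6:NNReal):ℝ) = 6 := by norm_num
  rw [this, habs2]
  linarith [abs_nonneg (u - v)]

lemma lip_image_null {K : NNReal} {g : ℝ → ℝ} {s t : Set ℝ}
    (h : LipschitzOnWith K g s) (hts : t ⊆ s) (ht : volume t = 0) :
    volume (g '' t) = 0 := by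
  have h2 := (h.mono hts).hausdorffMeasure_image_le (d := 1) zero_le_one
  rw [hausdorffMeasure_real] at h2
  refine le_antisymm (le_trans h2 ?_) zero_le
  rw [ht, mul_zero]

/-- A continuous bivariate function, nonzero at the origin, whose zero set has measure zero
but contains the ellipse `x² - xy + y² = 2`, admits no decomposition `f(x)f(y)f(x-y)`. -/
theorem no_product_decomposition (lam : ℝ × ℝ → ℝ)
    (hcont : Continuous lam)
    (h0 : lam (0, 0) ≠ 0)
    (hzero : volume {p : ℝ × ℝ | lam p = 0} = 0)
    (hellipse : ∀ x y : ℝ, x ^ 2 - x * y + y ^ 2 = 2 → lam (x, y) = 0) :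
    ¬ ∃ f : ℝ → ℝ, ∀ x y : ℝ, lam (x, y) = f x * f y * f (x - y) := by
  rintro ⟨f, hf⟩
  set Z : Set ℝ := {t | f t = 0} with hZdef
  -- Step 1 : Z is Lebesgue-null
  have hZnull : volume Z = 0 := by
    have hsub : Z ×ˢ (Set.univ : Set ℝ) ⊆ {p : ℝ × ℝ | lam p = 0} := by
      rintro ⟨x, y⟩ ⟨hx, -⟩
      simp only [Set.mem_setOf_eq] at hx ⊢
      rw [hf x y, hx]; ring
    have hprod : volume (Z ×ˢ (Set.univ : Set ℝ)) = 0 := measure_mono_null hsub hzero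
    rw [Measure.volume_eq_prod] at hprod
    have hae := MeasureTheory.Measure.measure_ae_null_of_prod_null hprod
    rw [Filter.EventuallyEq, ae_iff] at hae
    refine measure_mono_null ?_ hae
    intro x hx
    simp only [Set.mem_setOf_eq, Pi.zero_apply]
    have hsec : Prod.mk x ⁻¹' (Z ×ˢ (Set.univ : Set ℝ)) = Set.univ := by
      ext y; simp [hx]
    rw [hsec]
    simp
  -- Step 2 : pointwise facts on [0, 1/2]
  set D : Set ℝ := Set.Icc (0:ℝ) (8/5) with hDdef
  have hkey : ∀ a : ℝ, a ∈ Set.Icc (0:ℝ) (1/2) →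
      (f a = 0 ∨ (phi a ∈ Z ∩ D ∧ phi (phi a) = a) ∨
        ((a + phi a) ∈ Z ∩ D ∧ phi (a + phi a) = -a)) := by
    rintro a ⟨h0a, h1a⟩
    have hq : (0:ℝ) ≤ 8 - 3 * a ^ 2 := by nlinarith
    set r := Real.sqrt (8 - 3 * a ^ 2) with hrdef
    have hr2 : r ^ 2 = 8 - 3 * a ^ 2 := Real.sq_sqrt hq
    have hrnn : 0 ≤ r := Real.sqrt_nonneg _
    have hr_lb : 2 ≤ r := by nlinarith
    have hr_ub3 : r ≤ 3 := by nlinarith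
    have hr_ub : r ≤ 16/5 - a := by nlinarith [sq_nonneg (1 - 2*a)]
    set b := phi a with hbdef
    have hb : b = (-a + r) / 2 := rfl
    have hab : a ^ 2 + a * b + b ^ 2 = 2 := by rw [hb]; linear_combination hr2 / 4
    have hb_lb : 3/4 ≤ b := by rw [hb]; linarith
    have hb_ub : b ≤ 8/5 := by rw [hb]; linarith
    have hc_lb : 0 ≤ a + b := by linarith
    have hc_ub : a + b ≤ 8/5 := by rw [hb]; linarith
    have hba : a ≤ b := by linarith
    -- ellipse relation
    have hell : (a + b) ^ 2 - (a + b) * a + a ^ 2 = 2 := by linear_combination hab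
    have hlam := hellipse (a + b) a hell
    rw [hf (a + b) a, show (a + b) - a = b by ring] at hlam
    -- involution identities
    have hI1 : phi b = a := by
      have h8 : 8 - 3 * b ^ 2 = (2 * a + b) ^ 2 := by linear_combination -4 * hab
      unfold phi
      rw [h8, Real.sqrt_sq (by linarith : (0:ℝ) ≤ 2 * a + b)]
      ring
    have hI2 : phi (a + b) = -a := by
      have h8 : 8 - 3 * (a + b) ^ 2 = (b - a) ^ 2 := by linear_combination -4 * hab
      unfold phi
      rw [h8, Real.sqrt_sq (by linarith : (0:ℝ) ≤ b - a)]
      ring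
    rcases mul_eq_zero.1 hlam with h | h
    · rcases mul_eq_zero.1 h with h' | h'
      · right; right
        exact ⟨⟨h', hc_lb, hc_ub⟩, hI2⟩
      · left; exact h'
    · right; left
      exact ⟨⟨h, by linarith, hb_ub⟩, hI1⟩
  -- Step 3 : covering of [0, 1/2] by three null sets
  have hcover : Set.Icc (0:ℝ) (1/2) ⊆
      Z ∪ (phi '' (Z ∩ D) ∪ (fun t => -phi t) '' (Z ∩ D)) := by
    intro a ha
    rcases hkey a ha with h | ⟨hm, hi⟩ | ⟨hm, hi⟩
    · exact Or.inl h
    · exact Or.inr (Or.inl ⟨phi a, hm, hi⟩)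
    · refine Or.inr (Or.inr ⟨a + phi a, hm, ?_⟩)
      show -phi (a + phi a) = a
      rw [hi]; ring
  have him1 : volume (phi '' (Z ∩ D)) = 0 :=
    lip_image_null phi_lipschitz Set.inter_subset_right
      (measure_mono_null Set.inter_subset_left hZnull)
  have him2 : volume ((fun t => -phi t) '' (Z ∩ D)) = 0 := by
    have himg : (fun t => -phi t) '' (Z ∩ D) = -(phi '' (Z ∩ D)) := by
      rw [← Set.image_neg_eq_neg, ← Set.image_comp]
      rfl
    rw [himg, Measure.measure_neg]
    exact him1
  have hle : volume (Set.Icc (0:ℝ) (1/2)) = 0 := by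
    refine measure_mono_null hcover ?_
    refine measure_union_null hZnull (measure_union_null him1 him2)
  rw [Real.volume_Icc] at hle
  norm_num at hle
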